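/- arXiv:2410.15336 — 2 statements merged into one kernel-verified Lean document; each statement's English description precedes it below -/
import Mathlib

section
/- For a₁ ∈ ℝᵈ and R > 0, ∫_{‖x−a₁‖ > R} (2π)^{−d/2} exp(−‖x − a₁‖²/2) · (‖x − a₁‖²/2) dx ≤ d · exp((d/2)·log 2 − R²/4). -/
open MeasureTheory

section GaussianTailAux

open Real Filter Asymptotics Finset

lemma hB' : Integrable (fun x : ℝ => x ^ 2 * Real.exp (-(1/4) * x ^ 2)) := by
  have := integrable_rpow_mul_exp_neg_mul_sq (by norm_num : (0:ℝ) < 1/4) (by norm_num : (-1:ℝ) < 2)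
  simpa [Real.rpow_two] using this

lemma moment1d : ∫ x : ℝ, x ^ 2 * Real.exp (-(1/4) * x ^ 2) = 2 * Real.sqrt (4 * π) := by
  have hA : Integrable (fun x : ℝ => Real.exp (-(1/4) * x ^ 2)) :=
    integrable_exp_neg_mul_sq (by norm_num)
  have hB := hB'
  set F : ℝ → ℝ := fun x => -2 * x * Real.exp (-(1/4) * x ^ 2) with hF
  set F' : ℝ → ℝ := fun x => x ^ 2 * Real.exp (-(1/4) * x ^ 2) - 2 * Real.exp (-(1/4) * x ^ 2)
    with hF'
  have hderiv : ∀ x : ℝ, HasDerivAt F (F' x) x := by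
    intro x
    have h1 : HasDerivAt (fun x : ℝ => -(1/4 : ℝ) * x ^ 2) (-(1/4) * (2 * x ^ 1)) x :=
      (hasDerivAt_pow 2 x).const_mul _
    have h3 : HasDerivAt (fun x : ℝ => -2 * x) (-2) x := by
      simpa using (hasDerivAt_id x).const_mul (-2 : ℝ)
    have h4 : HasDerivAt (fun y : ℝ => -2 * y * Real.exp (-(1/4) * y ^ 2)) _ x :=
      h3.fun_mul h1.exp
    convert h4 using 1
    simp only [hF']
    ring
  have hint : Integrable F' := hB.sub (hA.const_mul 2)
  have htop : Tendsto F atTop (nhds 0) := by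
    have h := rpow_mul_exp_neg_mul_sq_isLittleO_exp_neg (by norm_num : (0:ℝ) < 1/4) 1
    have hg : Tendsto (fun x : ℝ => Real.exp (-(1/2) * x)) atTop (nhds 0) := by
      apply Real.tendsto_exp_atBot.comp
      exact Tendsto.const_mul_atTop_of_neg (by norm_num) tendsto_id
    have := (h.tendsto_zero_of_tendsto hg).const_mul (-2 : ℝ)
    simpa [hF, Real.rpow_one, mul_assoc] using this
  have hbot : Tendsto F atBot (nhds 0) := by
    have hneg : Tendsto (fun x : ℝ => F (-x)) atTop (nhds 0) := by
      have : (fun x : ℝ => F (-x)) = fun x => -F x := by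
        funext x; simp only [hF]; ring_nf
      rw [this]
      simpa using htop.neg
    have : F = (fun x : ℝ => F (-x)) ∘ Neg.neg := by funext x; simp
    rw [this]
    exact hneg.comp tendsto_neg_atBot_atTop
  have hIic : ∫ x in Set.Iic (0:ℝ), F' x = F 0 - 0 :=
    integral_Iic_of_hasDerivAt_of_tendsto' (fun x _ => hderiv x) hint.integrableOn hbot
  have hIoi : ∫ x in Set.Ioi (0:ℝ), F' x = 0 - F 0 :=
    integral_Ioi_of_hasDerivAt_of_tendsto' (fun x _ => hderiv x) hint.integrableOn htop
  have hzero : ∫ x : ℝ, F' x = 0 := by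
    rw [← intervalIntegral.integral_Iic_add_Ioi hint.integrableOn hint.integrableOn, hIic, hIoi]
    ring
  have hsub := integral_sub hB (hA.const_mul 2)
  have : ∫ x : ℝ, F' x = (∫ x : ℝ, x ^ 2 * Real.exp (-(1/4) * x ^ 2))
      - ∫ x : ℝ, 2 * Real.exp (-(1/4) * x ^ 2) := hsub
  rw [hzero] at this
  have hgauss : ∫ x : ℝ, Real.exp (-(1/4) * x ^ 2) = Real.sqrt (4 * π) := by
    rw [integral_gaussian, show π / (1/4) = 4 * π by ring]
  rw [integral_const_mul, hgauss] at this
  linarith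



lemma pi_eq {d : ℕ} (v : Fin d → ℝ) :
    (∑ i, (v i) ^ 2) * Real.exp (-(1/4) * ∑ i, (v i) ^ 2)
      = ∑ i, ∏ j, ((if j = i then (v j) ^ 2 else 1) * Real.exp (-(1/4) * (v j) ^ 2)) := by
  have hexp : Real.exp (-(1/4) * ∑ i, (v i) ^ 2) = ∏ j, Real.exp (-(1/4) * (v j) ^ 2) := by
    rw [← Real.exp_sum, Finset.mul_sum]
  rw [hexp, Finset.sum_mul]
  refine Finset.sum_congr rfl fun i _ => ?_
  rw [Finset.prod_mul_distrib, Finset.prod_ite_eq']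
  simp

lemma one_dim_int (d : ℕ) (i j : Fin d) :
    Integrable (fun t : ℝ => (if j = i then t ^ 2 else 1) * Real.exp (-(1/4) * t ^ 2)) := by
  by_cases h : j = i
  · simpa [h] using hB'
  · simpa [h] using integrable_exp_neg_mul_sq (by norm_num : (0:ℝ) < 1/4)

lemma pi_term_integrable {d : ℕ} (i : Fin d) :
    Integrable (fun v : Fin d → ℝ =>
      ∏ j, ((if j = i then (v j) ^ 2 else 1) * Real.exp (-(1/4) * (v j) ^ 2))) :=
  Integrable.fintype_prod (f := fun j (t : ℝ) =>
    (if j = i then t ^ 2 else 1) * Real.exp (-(1/4) * t ^ 2)) (fun j => one_dim_int d i j)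

lemma pi_integrable (d : ℕ) :
    Integrable (fun v : Fin d → ℝ => (∑ i, (v i) ^ 2) * Real.exp (-(1/4) * ∑ i, (v i) ^ 2)) := by
  have : (fun v : Fin d → ℝ => (∑ i, (v i) ^ 2) * Real.exp (-(1/4) * ∑ i, (v i) ^ 2))
      = fun v => ∑ i, ∏ j, ((if j = i then (v j) ^ 2 else 1) * Real.exp (-(1/4) * (v j) ^ 2)) :=
    funext pi_eq
  rw [this]
  exact integrable_finset_sum _ (fun i _ => pi_term_integrable i)

lemma pi_integral (d : ℕ) :
    ∫ v : Fin d → ℝ, (∑ i, (v i) ^ 2) * Real.exp (-(1/4) * ∑ i, (v i) ^ 2)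
      = 2 * d * Real.sqrt (4 * π) ^ d := by
  have hA : (0:ℝ) < Real.sqrt (4 * π) := Real.sqrt_pos.2 (by positivity)
  simp_rw [pi_eq]
  rw [integral_finset_sum _ (fun i _ => pi_term_integrable i)]
  have hterm : ∀ i : Fin d,
      (∫ v : Fin d → ℝ, ∏ j, ((if j = i then (v j) ^ 2 else 1) * Real.exp (-(1/4) * (v j) ^ 2)))
        = 2 * Real.sqrt (4 * π) ^ d := by
    intro i
    rw [integral_fintype_prod_volume_eq_prod (f := fun j (t : ℝ) =>
      (if j = i then t ^ 2 else 1) * Real.exp (-(1/4) * t ^ 2))]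
    have hval : ∀ j : Fin d,
        (∫ t : ℝ, (if j = i then t ^ 2 else 1) * Real.exp (-(1/4) * t ^ 2))
          = if j = i then 2 * Real.sqrt (4 * π) else Real.sqrt (4 * π) := by
      intro j
      by_cases h : j = i
      · simpa [h] using moment1d
      · simp only [h, if_false, one_mul]
        rw [integral_gaussian, show π / (1/4) = 4 * π by ring]
    simp_rw [hval]
    rw [← Finset.mul_prod_erase _ _ (Finset.mem_univ i)]
    rw [if_pos rfl]
    rw [Finset.prod_congr rfl (fun j hj => if_neg (Finset.mem_erase.1 hj).1),
      Finset.prod_const, Finset.card_erase_of_mem (Finset.mem_univ i), Finset.card_univ,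
      Fintype.card_fin]
    have hd : d - 1 + 1 = d := Nat.sub_add_cancel (Nat.one_le_iff_ne_zero.2 (by
      rintro rfl; exact absurd i.2 (by simp)))
    rw [mul_assoc, ← pow_succ', hd]
  simp_rw [hterm]
  rw [Finset.sum_const, Finset.card_univ, Fintype.card_fin, nsmul_eq_mul]
  ring



lemma norm_symm_sq {d : ℕ} (v : Fin d → ℝ) :
    ‖(MeasurableEquiv.toLp 2 (Fin d → ℝ)) v‖ ^ 2 = ∑ i, (v i) ^ 2 := by
  rw [EuclideanSpace.norm_eq, Real.sq_sqrt (by positivity)]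
  simp [MeasurableEquiv.toLp, sq_abs]
  rfl

lemma euclid_integrable (d : ℕ) :
    Integrable (fun x : EuclideanSpace ℝ (Fin d) => ‖x‖ ^ 2 * Real.exp (-(1/4) * ‖x‖ ^ 2)) := by
  have h : MeasurePreserving (MeasurableEquiv.toLp 2 (Fin d → ℝ)) :=
    (EuclideanSpace.volume_preserving_symm_measurableEquiv_toLp (Fin d)).symm
  rw [← MeasurePreserving.integrable_comp_emb h (MeasurableEquiv.measurableEmbedding _)]
  have : (fun x : EuclideanSpace ℝ (Fin d) => ‖x‖ ^ 2 * Real.exp (-(1/4) * ‖x‖ ^ 2)) ∘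
      (MeasurableEquiv.toLp 2 (Fin d → ℝ))
      = fun v : Fin d → ℝ => (∑ i, (v i) ^ 2) * Real.exp (-(1/4) * ∑ i, (v i) ^ 2) := by
    funext v
    rw [Function.comp_apply, norm_symm_sq]
  rw [this]
  exact pi_integrable d

lemma euclid_integral (d : ℕ) :
    ∫ x : EuclideanSpace ℝ (Fin d), ‖x‖ ^ 2 * Real.exp (-(1/4) * ‖x‖ ^ 2)
      = 2 * d * Real.sqrt (4 * π) ^ d := by
  have h : MeasurePreserving (MeasurableEquiv.toLp 2 (Fin d → ℝ)) :=
    (EuclideanSpace.volume_preserving_symm_measurableEquiv_toLp (Fin d)).symm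
  rw [← MeasurePreserving.integral_comp h (MeasurableEquiv.measurableEmbedding _)]
  have : ∀ v : Fin d → ℝ,
      ‖(MeasurableEquiv.toLp 2 (Fin d → ℝ)) v‖ ^ 2
        * Real.exp (-(1/4) * ‖(MeasurableEquiv.toLp 2 (Fin d → ℝ)) v‖ ^ 2)
      = (∑ i, (v i) ^ 2) * Real.exp (-(1/4) * ∑ i, (v i) ^ 2) := by
    intro v; rw [norm_symm_sq]
  simp_rw [this]
  exact pi_integral d



end GaussianTailAux

open Real Filter Asymptotics Finset in
/-- Weighted Gaussian tail bound:
`∫_{‖x−a₁‖ > R} (2π)^{−d/2} exp(−‖x−a₁‖²/2)·(‖x−a₁‖²/2) dx ≤ d·exp((d/2)·log 2 − R²/4)`. -/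
theorem gaussian_weighted_tail_bound {d : ℕ} (a₁ : EuclideanSpace ℝ (Fin d)) (R : ℝ)
    (hR : 0 < R) :
    ∫ x in {x : EuclideanSpace ℝ (Fin d) | R < ‖x - a₁‖},
        (2 * Real.pi) ^ (-(d : ℝ) / 2) * Real.exp (-‖x - a₁‖ ^ 2 / 2) * (‖x - a₁‖ ^ 2 / 2) ≤
      (d : ℝ) * Real.exp ((d : ℝ) / 2 * Real.log 2 - R ^ 2 / 4) := by
  set C : ℝ := Real.exp (-R ^ 2 / 4) * (2 * Real.pi) ^ (-(d : ℝ) / 2) / 2 with hC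
  set f : EuclideanSpace ℝ (Fin d) → ℝ := fun x =>
    (2 * Real.pi) ^ (-(d : ℝ) / 2) * Real.exp (-‖x - a₁‖ ^ 2 / 2) * (‖x - a₁‖ ^ 2 / 2) with hf
  set g : EuclideanSpace ℝ (Fin d) → ℝ := fun x =>
    C * (‖x - a₁‖ ^ 2 * Real.exp (-(1/4) * ‖x - a₁‖ ^ 2)) with hg
  have hpow_pos : (0:ℝ) < (2 * Real.pi) ^ (-(d : ℝ) / 2) :=
    Real.rpow_pos_of_pos (by positivity) _
  have hCpos : 0 < C := by positivity
  have hgint : Integrable g := ((euclid_integrable d).comp_sub_right a₁).const_mul C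
  have hgnonneg : ∀ x, 0 ≤ g x := fun x => by positivity
  have hS : MeasurableSet {x : EuclideanSpace ℝ (Fin d) | R < ‖x - a₁‖} := by
    apply measurableSet_lt measurable_const
    exact ((continuous_id.sub continuous_const).norm).measurable
  have hle : ∀ x ∈ {x : EuclideanSpace ℝ (Fin d) | R < ‖x - a₁‖}, f x ≤ g x := by
    intro x hx
    have hr : R < ‖x - a₁‖ := hx
    have hsplit : Real.exp (-‖x - a₁‖ ^ 2 / 2)
        = Real.exp (-(1/4) * ‖x - a₁‖ ^ 2) * Real.exp (-(1/4) * ‖x - a₁‖ ^ 2) := by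
      rw [← Real.exp_add]; ring_nf
    have hmono : Real.exp (-(1/4) * ‖x - a₁‖ ^ 2) ≤ Real.exp (-R ^ 2 / 4) := by
      apply Real.exp_le_exp.2
      have : R ^ 2 ≤ ‖x - a₁‖ ^ 2 := by
        apply pow_le_pow_left₀ hR.le hr.le
      nlinarith
    calc f x = Real.exp (-(1/4) * ‖x - a₁‖ ^ 2) *
          ((2 * Real.pi) ^ (-(d : ℝ) / 2) / 2 * (‖x - a₁‖ ^ 2 * Real.exp (-(1/4) * ‖x - a₁‖ ^ 2)))
        := by rw [hf]; simp only; rw [hsplit]; ring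
      _ ≤ Real.exp (-R ^ 2 / 4) *
          ((2 * Real.pi) ^ (-(d : ℝ) / 2) / 2 * (‖x - a₁‖ ^ 2 * Real.exp (-(1/4) * ‖x - a₁‖ ^ 2)))
        := by apply mul_le_mul_of_nonneg_right hmono (by positivity)
      _ = g x := by rw [hg, hC]; ring
  have hfcont : Continuous f := by
    have h1 : Continuous fun x : EuclideanSpace ℝ (Fin d) => ‖x - a₁‖ :=
      (continuous_id.sub continuous_const).norm
    fun_prop
  have hfint : IntegrableOn f {x : EuclideanSpace ℝ (Fin d) | R < ‖x - a₁‖} := by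
    apply Integrable.mono' hgint.integrableOn hfcont.aestronglyMeasurable.restrict
    filter_upwards [ae_restrict_mem hS] with x hx
    rw [Real.norm_eq_abs, abs_of_nonneg (by positivity)]
    exact hle x hx
  have step1 : ∫ x in {x : EuclideanSpace ℝ (Fin d) | R < ‖x - a₁‖}, f x
      ≤ ∫ x in {x : EuclideanSpace ℝ (Fin d) | R < ‖x - a₁‖}, g x :=
    setIntegral_mono_on hfint hgint.integrableOn hS hle
  have step2 : ∫ x in {x : EuclideanSpace ℝ (Fin d) | R < ‖x - a₁‖}, g x ≤ ∫ x, g x :=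
    setIntegral_le_integral hgint (ae_of_all _ hgnonneg)
  have step3 : ∫ x, g x = C * (2 * d * Real.sqrt (4 * π) ^ d) := by
    rw [hg, integral_const_mul]
    congr 1
    rw [← euclid_integral d]
    exact integral_sub_right_eq_self
      (fun x : EuclideanSpace ℝ (Fin d) => ‖x‖ ^ 2 * Real.exp (-(1/4) * ‖x‖ ^ 2)) a₁
  have final : C * (2 * d * Real.sqrt (4 * π) ^ d)
      = (d : ℝ) * Real.exp ((d : ℝ) / 2 * Real.log 2 - R ^ 2 / 4) := by
    have hsqrt : Real.sqrt (4 * π) ^ d = (4 * π) ^ ((d : ℝ) / 2) := by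
      rw [Real.sqrt_eq_rpow, ← Real.rpow_natCast ((4*π) ^ ((1:ℝ)/2)) d,
        ← Real.rpow_mul (by positivity)]
      congr 1; ring
    have hkey : (2 * Real.pi) ^ (-(d : ℝ) / 2) * (4 * π) ^ ((d : ℝ) / 2)
        = Real.exp ((d : ℝ) / 2 * Real.log 2) := by
      rw [neg_div, Real.rpow_neg (by positivity), inv_mul_eq_div, ← Real.div_rpow (by positivity) (by positivity)]
      rw [show (4 * π) / (2 * π) = 2 by field_simp; ring]
      rw [Real.rpow_def_of_pos (by norm_num), mul_comm]
    rw [hC, hsqrt,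
      show Real.exp (-R ^ 2 / 4) * (2 * Real.pi) ^ (-(d : ℝ) / 2) / 2
            * (2 * (d : ℝ) * (4 * π) ^ ((d : ℝ) / 2))
          = (d : ℝ) * ((2 * Real.pi) ^ (-(d : ℝ) / 2) * (4 * π) ^ ((d : ℝ) / 2))
            * Real.exp (-R ^ 2 / 4) by ring,
      hkey, mul_assoc, ← Real.exp_add]
    congr 2
    ring
  calc ∫ x in {x : EuclideanSpace ℝ (Fin d) | R < ‖x - a₁‖}, f x ≤ _ := step1
    _ ≤ ∫ x, g x := step2
    _ = C * (2 * d * Real.sqrt (4 * π) ^ d) := step3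
    _ = _ := final
end

section
/- Let π = w₁·N(a₁, I_d) + w₂·N(a₂, I_d) and π̃ = w̃₁·N(a₁, I_d) + w̃₂·N(a₂, I_d) with positive weights summing to 1, and let p be any probability density. Define Ω₁ = {x : ‖x−a₁‖ ≤ ‖a₁−a₂‖/4}, Ω₂ = {x : ‖x−a₂‖ ≤ ‖a₁−a₂‖/4}, Ω₃ = Ω₁ᶜ ∩ Ω₂ᶜ. Then ∫ ‖∇log π(x) − ∇log π̃(x)‖² p(x) dx ≤ 2·exp(−‖a₁−a₂‖²/2)·(w₂²/w₁² + w̃₂²/w̃₁² + w₁²/w₂² + w̃₁²/w̃₂²)·‖a₁−a₂‖² + 8·(‖a₁‖² + ‖a₂‖²)·∫_{Ω₃} p(x) dx. -/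
open MeasureTheory

/-- The unnormalized Gaussian kernel `γ_a(x) = exp(−‖x − a‖²/2)`. -/
noncomputable def gam {d : ℕ} (a x : EuclideanSpace ℝ (Fin d)) : ℝ :=
  Real.exp (-‖x - a‖ ^ 2 / 2)

/-- The score `∇ log π` of the mixture `π = w₁ N(a₁, I) + w₂ N(a₂, I)`. -/
noncomputable def mogScore {d : ℕ} (w₁ w₂ : ℝ) (a₁ a₂ x : EuclideanSpace ℝ (Fin d)) :
    EuclideanSpace ℝ (Fin d) :=
  (1 / (w₁ * gam a₁ x + w₂ * gam a₂ x)) •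
    ((w₁ * gam a₁ x) • a₁ + (w₂ * gam a₂ x) • a₂) - x

lemma gam_pos {d : ℕ} (a x : EuclideanSpace ℝ (Fin d)) : 0 < gam a x := Real.exp_pos _

noncomputable def lamW {d : ℕ} (w₁ w₂ : ℝ) (a₁ a₂ x : EuclideanSpace ℝ (Fin d)) : ℝ :=
  w₁ * gam a₁ x / (w₁ * gam a₁ x + w₂ * gam a₂ x)

lemma denom_pos {d : ℕ} {w₁ w₂ : ℝ} (hw₁ : 0 < w₁) (hw₂ : 0 < w₂)
    (a₁ a₂ x : EuclideanSpace ℝ (Fin d)) : 0 < w₁ * gam a₁ x + w₂ * gam a₂ x := by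
  have h1 := gam_pos a₁ x
  have h2 := gam_pos a₂ x
  positivity

lemma lamW_nonneg {d : ℕ} {w₁ w₂ : ℝ} (hw₁ : 0 < w₁) (hw₂ : 0 < w₂)
    (a₁ a₂ x : EuclideanSpace ℝ (Fin d)) : 0 ≤ lamW w₁ w₂ a₁ a₂ x := by
  have h1 := gam_pos a₁ x
  have h2 := denom_pos hw₁ hw₂ a₁ a₂ x
  unfold lamW
  positivity

lemma lamW_le_one {d : ℕ} {w₁ w₂ : ℝ} (hw₁ : 0 < w₁) (hw₂ : 0 < w₂)
    (a₁ a₂ x : EuclideanSpace ℝ (Fin d)) : lamW w₁ w₂ a₁ a₂ x ≤ 1 := by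
  have h1 := gam_pos a₂ x
  have h2 := denom_pos hw₁ hw₂ a₁ a₂ x
  unfold lamW
  rw [div_le_one h2]
  nlinarith

lemma mogScore_eq {d : ℕ} {w₁ w₂ : ℝ} (hw₁ : 0 < w₁) (hw₂ : 0 < w₂)
    (a₁ a₂ x : EuclideanSpace ℝ (Fin d)) :
    mogScore w₁ w₂ a₁ a₂ x =
      lamW w₁ w₂ a₁ a₂ x • a₁ + (1 - lamW w₁ w₂ a₁ a₂ x) • a₂ - x := by
  have hD := denom_pos hw₁ hw₂ a₁ a₂ x
  unfold mogScore lamW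
  rw [smul_add, smul_smul, smul_smul]
  have e1 : (1:ℝ) / (w₁ * gam a₁ x + w₂ * gam a₂ x) * (w₁ * gam a₁ x)
      = w₁ * gam a₁ x / (w₁ * gam a₁ x + w₂ * gam a₂ x) := by ring
  have e2 : (1:ℝ) / (w₁ * gam a₁ x + w₂ * gam a₂ x) * (w₂ * gam a₂ x)
      = 1 - w₁ * gam a₁ x / (w₁ * gam a₁ x + w₂ * gam a₂ x) := by
    field_simp
    ring
  rw [e1, e2]

lemma score_diff {d : ℕ} {w₁ w₂ tw₁ tw₂ : ℝ} (hw₁ : 0 < w₁) (hw₂ : 0 < w₂)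
    (htw₁ : 0 < tw₁) (htw₂ : 0 < tw₂) (a₁ a₂ x : EuclideanSpace ℝ (Fin d)) :
    mogScore w₁ w₂ a₁ a₂ x - mogScore tw₁ tw₂ a₁ a₂ x =
      (lamW w₁ w₂ a₁ a₂ x - lamW tw₁ tw₂ a₁ a₂ x) • (a₁ - a₂) := by
  rw [mogScore_eq hw₁ hw₂, mogScore_eq htw₁ htw₂]
  module


lemma one_sub_lamW_le {d : ℕ} {w₁ w₂ : ℝ} (hw₁ : 0 < w₁) (hw₂ : 0 < w₂)
    (a₁ a₂ x : EuclideanSpace ℝ (Fin d)) (hx : ‖x - a₁‖ ≤ ‖a₁ - a₂‖ / 4) :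
    1 - lamW w₁ w₂ a₁ a₂ x ≤ w₂ / w₁ * Real.exp (-‖a₁ - a₂‖ ^ 2 / 4) := by
  have hg₁ := gam_pos a₁ x
  have hg₂ := gam_pos a₂ x
  have hD := denom_pos hw₁ hw₂ a₁ a₂ x
  have h1 : 1 - lamW w₁ w₂ a₁ a₂ x
      = (w₂ * gam a₂ x) / (w₁ * gam a₁ x + w₂ * gam a₂ x) := by
    unfold lamW; field_simp; ring
  have h2 : (w₂ * gam a₂ x) / (w₁ * gam a₁ x + w₂ * gam a₂ x)
      ≤ (w₂ * gam a₂ x) / (w₁ * gam a₁ x) := by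
    apply div_le_div_of_nonneg_left (by positivity) (by positivity)
    nlinarith
  have tri : ‖a₁ - a₂‖ ≤ ‖x - a₁‖ + ‖x - a₂‖ := by
    calc ‖a₁ - a₂‖ = ‖(a₁ - x) + (x - a₂)‖ := by abel_nf
    _ ≤ ‖a₁ - x‖ + ‖x - a₂‖ := norm_add_le _ _
    _ = ‖x - a₁‖ + ‖x - a₂‖ := by rw [norm_sub_rev]
  have hratio : gam a₂ x / gam a₁ x
      = Real.exp ((‖x - a₁‖ ^ 2 - ‖x - a₂‖ ^ 2) / 2) := by
    unfold gam
    rw [← Real.exp_sub]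
    ring_nf
  have hexp : (‖x - a₁‖ ^ 2 - ‖x - a₂‖ ^ 2) / 2 ≤ -‖a₁ - a₂‖ ^ 2 / 4 := by
    have h0 : (0:ℝ) ≤ ‖x - a₁‖ := norm_nonneg _
    have h0' : (0:ℝ) ≤ ‖x - a₂‖ := norm_nonneg _
    nlinarith
  have h3 : (w₂ * gam a₂ x) / (w₁ * gam a₁ x)
      ≤ w₂ / w₁ * Real.exp (-‖a₁ - a₂‖ ^ 2 / 4) := by
    have : (w₂ * gam a₂ x) / (w₁ * gam a₁ x) = w₂ / w₁ * (gam a₂ x / gam a₁ x) := by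
      field_simp
    rw [this, hratio]
    have := Real.exp_le_exp.mpr hexp
    have hww : (0:ℝ) ≤ w₂ / w₁ := by positivity
    exact mul_le_mul_of_nonneg_left (Real.exp_le_exp.mpr hexp) hww
  linarith [h1 ▸ le_trans h2 h3]

lemma key {d : ℕ} {w₁ w₂ tw₁ tw₂ : ℝ} (hw₁ : 0 < w₁) (hw₂ : 0 < w₂)
    (htw₁ : 0 < tw₁) (htw₂ : 0 < tw₂) (a₁ a₂ x : EuclideanSpace ℝ (Fin d))
    (hx : ‖x - a₁‖ ≤ ‖a₁ - a₂‖ / 4) :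
    ‖mogScore w₁ w₂ a₁ a₂ x - mogScore tw₁ tw₂ a₁ a₂ x‖ ^ 2 ≤
      2 * Real.exp (-‖a₁ - a₂‖ ^ 2 / 2) * (w₂ ^ 2 / w₁ ^ 2 + tw₂ ^ 2 / tw₁ ^ 2) *
        ‖a₁ - a₂‖ ^ 2 := by
  rw [score_diff hw₁ hw₂ htw₁ htw₂, norm_smul, mul_pow, Real.norm_eq_abs, sq_abs]
  set L := lamW w₁ w₂ a₁ a₂ x with hLdef
  set T := lamW tw₁ tw₂ a₁ a₂ x with hTdef
  have hL1 : L ≤ 1 := lamW_le_one hw₁ hw₂ a₁ a₂ x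
  have hT1 : T ≤ 1 := lamW_le_one htw₁ htw₂ a₁ a₂ x
  have h1 : 1 - L ≤ w₂ / w₁ * Real.exp (-‖a₁ - a₂‖ ^ 2 / 4) :=
    one_sub_lamW_le hw₁ hw₂ a₁ a₂ x hx
  have h2 : 1 - T ≤ tw₂ / tw₁ * Real.exp (-‖a₁ - a₂‖ ^ 2 / 4) :=
    one_sub_lamW_le htw₁ htw₂ a₁ a₂ x hx
  have hE2 : Real.exp (-‖a₁ - a₂‖ ^ 2 / 4) ^ 2 = Real.exp (-‖a₁ - a₂‖ ^ 2 / 2) := by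
    rw [pow_two, ← Real.exp_add]
    congr 1
    ring
  have hq1 : (1 - L) ^ 2 ≤ w₂ ^ 2 / w₁ ^ 2 * Real.exp (-‖a₁ - a₂‖ ^ 2 / 2) := by
    calc (1 - L) ^ 2 ≤ (w₂ / w₁ * Real.exp (-‖a₁ - a₂‖ ^ 2 / 4)) ^ 2 :=
      pow_le_pow_left₀ (by linarith) h1 2
    _ = w₂ ^ 2 / w₁ ^ 2 * Real.exp (-‖a₁ - a₂‖ ^ 2 / 2) := by
      rw [mul_pow, div_pow, hE2]
  have hq2 : (1 - T) ^ 2 ≤ tw₂ ^ 2 / tw₁ ^ 2 * Real.exp (-‖a₁ - a₂‖ ^ 2 / 2) := by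
    calc (1 - T) ^ 2 ≤ (tw₂ / tw₁ * Real.exp (-‖a₁ - a₂‖ ^ 2 / 4)) ^ 2 :=
      pow_le_pow_left₀ (by linarith) h2 2
    _ = tw₂ ^ 2 / tw₁ ^ 2 * Real.exp (-‖a₁ - a₂‖ ^ 2 / 2) := by
      rw [mul_pow, div_pow, hE2]
  have h5 : (L - T) ^ 2 ≤ 2 * ((1 - L) ^ 2 + (1 - T) ^ 2) := by
    nlinarith [sq_nonneg ((1 - L) + (1 - T))]
  have h6 : (L - T) ^ 2 ≤ 2 * Real.exp (-‖a₁ - a₂‖ ^ 2 / 2) *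
      (w₂ ^ 2 / w₁ ^ 2 + tw₂ ^ 2 / tw₁ ^ 2) := by nlinarith
  have hr2 : (0:ℝ) ≤ ‖a₁ - a₂‖ ^ 2 := by positivity
  exact mul_le_mul_of_nonneg_right h6 hr2

lemma mogScore_comm {d : ℕ} (w₁ w₂ : ℝ) (a₁ a₂ x : EuclideanSpace ℝ (Fin d)) :
    mogScore w₁ w₂ a₁ a₂ x = mogScore w₂ w₁ a₂ a₁ x := by
  unfold mogScore
  rw [add_comm (w₁ * gam a₁ x), add_comm ((w₁ * gam a₁ x) • a₁)]

lemma bound_all {d : ℕ} {w₁ w₂ tw₁ tw₂ : ℝ} (hw₁ : 0 < w₁) (hw₂ : 0 < w₂)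
    (htw₁ : 0 < tw₁) (htw₂ : 0 < tw₂) (a₁ a₂ x : EuclideanSpace ℝ (Fin d)) :
    ‖mogScore w₁ w₂ a₁ a₂ x - mogScore tw₁ tw₂ a₁ a₂ x‖ ^ 2 ≤
      8 * (‖a₁‖ ^ 2 + ‖a₂‖ ^ 2) := by
  rw [score_diff hw₁ hw₂ htw₁ htw₂, norm_smul, mul_pow, Real.norm_eq_abs, sq_abs]
  have hL0 := lamW_nonneg hw₁ hw₂ a₁ a₂ x
  have hT0 := lamW_nonneg htw₁ htw₂ a₁ a₂ x
  have hL1 := lamW_le_one hw₁ hw₂ a₁ a₂ x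
  have hT1 := lamW_le_one htw₁ htw₂ a₁ a₂ x
  have hn : ‖a₁ - a₂‖ ≤ ‖a₁‖ + ‖a₂‖ := norm_sub_le _ _
  have hn0 : (0:ℝ) ≤ ‖a₁ - a₂‖ := norm_nonneg _
  have hsq : ‖a₁ - a₂‖ ^ 2 ≤ (‖a₁‖ + ‖a₂‖) ^ 2 := pow_le_pow_left₀ hn0 hn 2
  have hLT : (lamW w₁ w₂ a₁ a₂ x - lamW tw₁ tw₂ a₁ a₂ x) ^ 2 ≤ 1 := by nlinarith
  have := mul_le_mul_of_nonneg_right hLT (sq_nonneg ‖a₁ - a₂‖)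
  nlinarith [sq_nonneg (‖a₁‖ - ‖a₂‖)]


lemma continuous_mogScore {d : ℕ} {w₁ w₂ : ℝ} (hw₁ : 0 < w₁) (hw₂ : 0 < w₂)
    (a₁ a₂ : EuclideanSpace ℝ (Fin d)) :
    Continuous (fun x => mogScore w₁ w₂ a₁ a₂ x) := by
  have hg : ∀ a : EuclideanSpace ℝ (Fin d), Continuous (fun x => gam a x) := by
    intro a
    unfold gam
    exact Real.continuous_exp.comp
      ((((continuous_id.sub continuous_const).norm.pow 2).neg).div_const 2)
  have hD : Continuous fun x : EuclideanSpace ℝ (Fin d) =>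
      w₁ * gam a₁ x + w₂ * gam a₂ x :=
    ((continuous_const.mul (hg a₁)).add (continuous_const.mul (hg a₂)))
  have hDne : ∀ x, (w₁ * gam a₁ x + w₂ * gam a₂ x) ≠ 0 :=
    fun x => (denom_pos hw₁ hw₂ a₁ a₂ x).ne'
  unfold mogScore
  exact ((continuous_const.div hD hDne).smul
    (((continuous_const.mul (hg a₁)).smul continuous_const).add
      ((continuous_const.mul (hg a₂)).smul continuous_const))).sub continuous_id

/-- Upper bound on the `L²(p)` score error between two Gaussian mixtures with the same
components but different weights. -/
theorem score_error_upper_bound_mog {d : ℕ} (a₁ a₂ : EuclideanSpace ℝ (Fin d))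
    (w₁ w₂ tw₁ tw₂ : ℝ) (hw₁ : 0 < w₁) (hw₂ : 0 < w₂) (htw₁ : 0 < tw₁) (htw₂ : 0 < tw₂)
    (hsum : w₁ + w₂ = 1) (htsum : tw₁ + tw₂ = 1)
    (p : EuclideanSpace ℝ (Fin d) → ℝ) (hp0 : ∀ x, 0 ≤ p x)
    (hpint : Integrable p) (hp1 : ∫ x, p x = 1) :
    ∫ x, ‖mogScore w₁ w₂ a₁ a₂ x - mogScore tw₁ tw₂ a₁ a₂ x‖ ^ 2 * p x ≤
      2 * Real.exp (-‖a₁ - a₂‖ ^ 2 / 2) *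
        (w₂ ^ 2 / w₁ ^ 2 + tw₂ ^ 2 / tw₁ ^ 2 + w₁ ^ 2 / w₂ ^ 2 + tw₁ ^ 2 / tw₂ ^ 2) *
        ‖a₁ - a₂‖ ^ 2 +
      8 * (‖a₁‖ ^ 2 + ‖a₂‖ ^ 2) *
        ∫ x in {x : EuclideanSpace ℝ (Fin d) |
            ‖a₁ - a₂‖ / 4 < ‖x - a₁‖ ∧ ‖a₁ - a₂‖ / 4 < ‖x - a₂‖}, p x := by
  have hΩmeas : MeasurableSet {x : EuclideanSpace ℝ (Fin d) |
      ‖a₁ - a₂‖ / 4 < ‖x - a₁‖ ∧ ‖a₁ - a₂‖ / 4 < ‖x - a₂‖} := by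
    have h1 : Continuous fun x : EuclideanSpace ℝ (Fin d) => ‖x - a₁‖ :=
      (continuous_id.sub continuous_const).norm
    have h2 : Continuous fun x : EuclideanSpace ℝ (Fin d) => ‖x - a₂‖ :=
      (continuous_id.sub continuous_const).norm
    exact ((isOpen_lt continuous_const h1).inter
      (isOpen_lt continuous_const h2)).measurableSet
  have hB0 : (0:ℝ) ≤ 8 * (‖a₁‖ ^ 2 + ‖a₂‖ ^ 2) := by positivity
  -- pointwise bound
  have hpt : ∀ x, ‖mogScore w₁ w₂ a₁ a₂ x - mogScore tw₁ tw₂ a₁ a₂ x‖ ^ 2 * p x ≤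
      2 * Real.exp (-‖a₁ - a₂‖ ^ 2 / 2) *
        (w₂ ^ 2 / w₁ ^ 2 + tw₂ ^ 2 / tw₁ ^ 2 + w₁ ^ 2 / w₂ ^ 2 + tw₁ ^ 2 / tw₂ ^ 2) *
        ‖a₁ - a₂‖ ^ 2 * p x +
      8 * (‖a₁‖ ^ 2 + ‖a₂‖ ^ 2) *
        Set.indicator {x : EuclideanSpace ℝ (Fin d) |
            ‖a₁ - a₂‖ / 4 < ‖x - a₁‖ ∧ ‖a₁ - a₂‖ / 4 < ‖x - a₂‖} p x := by
    intro x
    have hA0 : (0:ℝ) ≤ 2 * Real.exp (-‖a₁ - a₂‖ ^ 2 / 2) *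
        (w₂ ^ 2 / w₁ ^ 2 + tw₂ ^ 2 / tw₁ ^ 2 + w₁ ^ 2 / w₂ ^ 2 + tw₁ ^ 2 / tw₂ ^ 2) *
        ‖a₁ - a₂‖ ^ 2 := by positivity
    by_cases hxΩ : x ∈ {x : EuclideanSpace ℝ (Fin d) |
        ‖a₁ - a₂‖ / 4 < ‖x - a₁‖ ∧ ‖a₁ - a₂‖ / 4 < ‖x - a₂‖}
    · rw [Set.indicator_of_mem hxΩ]
      have h := bound_all hw₁ hw₂ htw₁ htw₂ a₁ a₂ x
      have h2 := mul_le_mul_of_nonneg_right h (hp0 x)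
      have h3 := mul_nonneg hA0 (hp0 x)
      linarith
    · rw [Set.indicator_of_notMem hxΩ, mul_zero, add_zero]
      apply mul_le_mul_of_nonneg_right _ (hp0 x)
      simp only [Set.mem_setOf_eq, not_and_or, not_lt] at hxΩ
      have hex := (Real.exp_pos (-‖a₁ - a₂‖ ^ 2 / 2)).le
      have hr2 := sq_nonneg ‖a₁ - a₂‖
      have e1 : (0:ℝ) ≤ w₂ ^ 2 / w₁ ^ 2 := by positivity
      have e2 : (0:ℝ) ≤ tw₂ ^ 2 / tw₁ ^ 2 := by positivity
      have e3 : (0:ℝ) ≤ w₁ ^ 2 / w₂ ^ 2 := by positivity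
      have e4 : (0:ℝ) ≤ tw₁ ^ 2 / tw₂ ^ 2 := by positivity
      rcases hxΩ with h | h
      · have hk := key hw₁ hw₂ htw₁ htw₂ a₁ a₂ x h
        refine le_trans hk ?_
        apply mul_le_mul_of_nonneg_right _ hr2
        apply mul_le_mul_of_nonneg_left _ (by positivity)
        linarith
      · have h' : ‖x - a₂‖ ≤ ‖a₂ - a₁‖ / 4 := by rwa [norm_sub_rev a₂ a₁]
        have hk := key hw₂ hw₁ htw₂ htw₁ a₂ a₁ x h'
        rw [← mogScore_comm w₁ w₂ a₁ a₂ x, ← mogScore_comm tw₁ tw₂ a₁ a₂ x, norm_sub_rev a₂ a₁] at hk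
        refine le_trans hk ?_
        apply mul_le_mul_of_nonneg_right _ hr2
        apply mul_le_mul_of_nonneg_left _ (by positivity)
        linarith
  -- integrability
  have hcont : Continuous fun x =>
      ‖mogScore w₁ w₂ a₁ a₂ x - mogScore tw₁ tw₂ a₁ a₂ x‖ ^ 2 :=
    (((continuous_mogScore hw₁ hw₂ a₁ a₂).sub
      (continuous_mogScore htw₁ htw₂ a₁ a₂)).norm.pow 2)
  have hint1 : Integrable (fun x =>
      ‖mogScore w₁ w₂ a₁ a₂ x - mogScore tw₁ tw₂ a₁ a₂ x‖ ^ 2 * p x) := by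
    apply hpint.bdd_mul (c := 8 * (‖a₁‖ ^ 2 + ‖a₂‖ ^ 2)) hcont.aestronglyMeasurable
    refine Filter.Eventually.of_forall (fun x => ?_)
    rw [Real.norm_of_nonneg (by positivity)]
    exact bound_all hw₁ hw₂ htw₁ htw₂ a₁ a₂ x
  have hint2a : Integrable (fun x =>
      2 * Real.exp (-‖a₁ - a₂‖ ^ 2 / 2) *
        (w₂ ^ 2 / w₁ ^ 2 + tw₂ ^ 2 / tw₁ ^ 2 + w₁ ^ 2 / w₂ ^ 2 + tw₁ ^ 2 / tw₂ ^ 2) *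
        ‖a₁ - a₂‖ ^ 2 * p x) := hpint.const_mul _
  have hint2b : Integrable (fun x => 8 * (‖a₁‖ ^ 2 + ‖a₂‖ ^ 2) *
      Set.indicator {x : EuclideanSpace ℝ (Fin d) |
          ‖a₁ - a₂‖ / 4 < ‖x - a₁‖ ∧ ‖a₁ - a₂‖ / 4 < ‖x - a₂‖} p x) :=
    (hpint.indicator hΩmeas).const_mul _
  calc ∫ x, ‖mogScore w₁ w₂ a₁ a₂ x - mogScore tw₁ tw₂ a₁ a₂ x‖ ^ 2 * p x
      ≤ ∫ x, (2 * Real.exp (-‖a₁ - a₂‖ ^ 2 / 2) *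
        (w₂ ^ 2 / w₁ ^ 2 + tw₂ ^ 2 / tw₁ ^ 2 + w₁ ^ 2 / w₂ ^ 2 + tw₁ ^ 2 / tw₂ ^ 2) *
        ‖a₁ - a₂‖ ^ 2 * p x +
      8 * (‖a₁‖ ^ 2 + ‖a₂‖ ^ 2) *
        Set.indicator {x : EuclideanSpace ℝ (Fin d) |
            ‖a₁ - a₂‖ / 4 < ‖x - a₁‖ ∧ ‖a₁ - a₂‖ / 4 < ‖x - a₂‖} p x) :=
      integral_mono hint1 (hint2a.add hint2b) hpt
    _ = 2 * Real.exp (-‖a₁ - a₂‖ ^ 2 / 2) *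
        (w₂ ^ 2 / w₁ ^ 2 + tw₂ ^ 2 / tw₁ ^ 2 + w₁ ^ 2 / w₂ ^ 2 + tw₁ ^ 2 / tw₂ ^ 2) *
        ‖a₁ - a₂‖ ^ 2 * (∫ x, p x) +
        8 * (‖a₁‖ ^ 2 + ‖a₂‖ ^ 2) * (∫ x, Set.indicator {x : EuclideanSpace ℝ (Fin d) |
            ‖a₁ - a₂‖ / 4 < ‖x - a₁‖ ∧ ‖a₁ - a₂‖ / 4 < ‖x - a₂‖} p x) := by
      rw [integral_add hint2a hint2b, integral_const_mul, integral_const_mul]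
    _ = _ := by
      rw [hp1, mul_one, integral_indicator hΩmeas]
end
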